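/- For every H with 0 < H < 1, the limit as n → ∞ of (1/n²)·∑_{q=n}^{∞} exp(−n²/q)·(q/n²)^(H−2) equals Γ(1−H), the Gamma function evaluated at 1−H. -/

import Mathlib

open Filter MeasureTheory Set Real
open scoped Interval

noncomputable def fnn (H c x : ℝ) : ℝ := Real.exp (-(c/x)) * (x/c)^(H-2)
noncomputable def hnn (H c x : ℝ) : ℝ := fnn H c x * (c/x^2 + (2-H)/x)

lemma fnn_nonneg (H c x : ℝ) (hc : 0 < c) (hx : 0 ≤ x) : 0 ≤ fnn H c x :=
  mul_nonneg (Real.exp_nonneg _) (Real.rpow_nonneg (div_nonneg hx hc.le) _)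

lemma fnn_contOn (H c : ℝ) (hc : 0 < c) : ContinuousOn (fnn H c) (Ioi 0) := by
  apply ContinuousOn.mul
  · exact (Real.continuous_exp.comp_continuousOn
      ((continuousOn_const.div continuousOn_id (fun x hx => ne_of_gt hx)).neg))
  · exact (continuousOn_id.div_const c).rpow_const
      (fun x hx => Or.inl (div_ne_zero (ne_of_gt hx) hc.ne'))

lemma hnn_contOn (H c : ℝ) (hc : 0 < c) : ContinuousOn (hnn H c) (Ioi 0) := by
  apply (fnn_contOn H c hc).mul
  apply ContinuousOn.add
  · exact continuousOn_const.div (continuousOn_pow 2) (fun x hx => pow_ne_zero 2 (ne_of_gt hx))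
  · exact continuousOn_const.div continuousOn_id (fun x hx => ne_of_gt hx)

lemma subst_integral (c : ℝ) (hc : 0 < c) (G : ℝ → ℝ) (hG : ContinuousOn G (Ioi 0))
    {a b : ℝ} (ha : 0 < a) (hab : a ≤ b) :
    ∫ x in a..b, G x = ∫ u in (c/b)..(c/a), (c/u^2) * G (c/u) := by
  have hb : 0 < b := lt_of_lt_of_le ha hab
  have hba : c/b ≤ c/a := by gcongr
  have hcb : 0 < c/b := div_pos hc hb
  have huIcc : [[c/a, c/b]] = Icc (c/b) (c/a) := by
    rw [Set.uIcc_of_ge hba]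
  have hsub : [[c/a, c/b]] ⊆ Ioi 0 := by
    rw [huIcc]; intro u hu; exact lt_of_lt_of_le hcb hu.1
  have key := intervalIntegral.integral_comp_smul_deriv'' (a := c/a) (b := c/b)
    (f := fun u => c/u) (f' := fun u => -(c/u^2)) (g := G)
    (by exact continuousOn_const.div continuousOn_id (fun u hu => ne_of_gt (hsub hu)))
    (by
      intro u hu
      have hu0 : 0 < u := lt_trans hcb (by rw [min_eq_right hba] at hu; exact hu.1)
      have hd : HasDerivAt (fun u : ℝ => c/u) (-(c/u^2)) u := by
        have := (hasDerivAt_const u c).div (hasDerivAt_id u) hu0.ne'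
        refine this.congr_deriv ?_
        simp only [id_eq]
        ring
      exact hd.hasDerivWithinAt)
    (by
      apply ContinuousOn.neg
      exact continuousOn_const.div (continuousOn_pow 2)
        (fun u hu => pow_ne_zero 2 (ne_of_gt (hsub hu))))
    (by
      apply hG.mono
      rintro x ⟨u, hu, rfl⟩
      exact div_pos hc (hsub hu))
  have hfa : c/(c/a) = a := by field_simp
  have hfb : c/(c/b) = b := by field_simp
  simp only [Function.comp, smul_eq_mul] at key
  rw [hfa, hfb] at key
  rw [← key, intervalIntegral.integral_symm (c/a) (c/b), ← intervalIntegral.integral_neg]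
  congr 1 with u
  ring

lemma uIcc_pos {p q : ℝ} (hp : 0 < p) (hq : 0 < q) : [[p, q]] ⊆ Ioi 0 := by
  intro u hu
  exact lt_of_lt_of_le (lt_min hp hq) hu.1

lemma integral_fnn_eq (H c : ℝ) (hc : 0 < c) {a b : ℝ} (ha : 0 < a) (hab : a ≤ b) :
    ∫ x in a..b, fnn H c x = c * ∫ u in (c/b)..(c/a), Real.exp (-u) * u^(-H) := by
  have hb : 0 < b := lt_of_lt_of_le ha hab
  rw [subst_integral c hc _ (fnn_contOn H c hc) ha hab, ← intervalIntegral.integral_const_mul]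
  apply intervalIntegral.integral_congr
  intro u hu
  have hu0 : 0 < u := uIcc_pos (div_pos hc hb) (div_pos hc ha) hu
  simp only [fnn]
  have h1 : c/(c/u) = u := by field_simp
  have h2 : (c/u)/c = u⁻¹ := by
    rw [div_div, mul_comm, ← div_div, div_self hc.ne', one_div]
  have h3 : (u⁻¹ : ℝ)^(H-2) = u^(2-H) := by
    rw [Real.inv_rpow hu0.le, ← Real.rpow_neg hu0.le]
    norm_num
  have h4 : u^(2-H) = u^(-H) * u^2 := by
    have h := Real.rpow_add hu0 (-H) 2
    rw [show (2:ℝ)-H = -H+2 by ring, h]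
    rw [Real.rpow_two]
  rw [h1, h2, h3, h4]
  field_simp

lemma integral_hnn_eq (H c : ℝ) (hc : 0 < c) {a b : ℝ} (ha : 0 < a) (hab : a ≤ b) :
    ∫ x in a..b, hnn H c x
      = ∫ u in (c/b)..(c/a), Real.exp (-u) * (u^(2-H) + (2-H) * u^(1-H)) := by
  have hb : 0 < b := lt_of_lt_of_le ha hab
  rw [subst_integral c hc _ (hnn_contOn H c hc) ha hab]
  apply intervalIntegral.integral_congr
  intro u hu
  have hu0 : 0 < u := uIcc_pos (div_pos hc hb) (div_pos hc ha) hu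
  simp only [hnn, fnn]
  have h1 : c/(c/u) = u := by field_simp
  have h2 : (c/u)/c = u⁻¹ := by
    rw [div_div, mul_comm, ← div_div, div_self hc.ne', one_div]
  have h3 : (u⁻¹ : ℝ)^(H-2) = u^(2-H) := by
    rw [Real.inv_rpow hu0.le, ← Real.rpow_neg hu0.le]
    norm_num
  have h4 : u^(2-H) = u^(1-H) * u := by
    have h := Real.rpow_add hu0 (1-H) 1
    rw [Real.rpow_one] at h
    rw [show (2:ℝ)-H = 1-H+1 by ring, h]
  rw [h1, h2, h3, h4]
  field_simp

lemma hasDerivAt_fnn (H c : ℝ) (hc : 0 < c) {x : ℝ} (hx : 0 < x) :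
    HasDerivAt (fnn H c) (fnn H c x * (c/x^2 + (H-2)/x)) x := by
  have hx0 : x ≠ 0 := hx.ne'
  have hd1 : HasDerivAt (fun y : ℝ => -(c/y)) (c/x^2) x := by
    have := ((hasDerivAt_const x c).div (hasDerivAt_id x) hx0).neg
    refine this.congr_deriv ?_
    simp only [id_eq]
    ring
  have hd1' : HasDerivAt (fun y : ℝ => Real.exp (-(c/y))) (Real.exp (-(c/x)) * (c/x^2)) x :=
    hd1.exp
  have hbase : HasDerivAt (fun y : ℝ => y/c) (1/c) x := by
    simpa using (hasDerivAt_id x).div_const c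
  have hpow := (Real.hasDerivAt_rpow_const (x := x/c) (p := H-2)
    (Or.inl (div_ne_zero hx0 hc.ne')))
  have hd2 : HasDerivAt (fun y : ℝ => (y/c)^(H-2)) ((H-2) * (x/c)^(H-2-1) * (1/c)) x :=
    by have := hpow.comp x hbase; exact this
  have := hd1'.mul hd2
  have hfactor : (x/c)^(H-2-1) = (x/c)^(H-2) * (c/x) := by
    rw [Real.rpow_sub (div_pos hx hc), Real.rpow_one]
    field_simp
  refine this.congr_deriv ?_
  simp only [fnn]
  rw [hfactor]
  field_simp

lemma fnn_le (H c : ℝ) (hc : 0 < c) {x : ℝ} (hx : 0 < x) :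
    fnn H c x ≤ (c^(H-2))⁻¹ * x^(H-2) := by
  simp only [fnn]
  have h1 : Real.exp (-(c/x)) ≤ 1 := by
    rw [Real.exp_le_one_iff]
    have : 0 < c/x := div_pos hc hx
    linarith
  have h2 : (x/c)^(H-2) = (c^(H-2))⁻¹ * x^(H-2) := by
    rw [Real.div_rpow hx.le hc.le, div_eq_mul_inv]
    ring
  calc Real.exp (-(c/x)) * (x/c)^(H-2) ≤ 1 * (x/c)^(H-2) := by
        apply mul_le_mul_of_nonneg_right h1 (Real.rpow_nonneg (by positivity) _)
    _ = (c^(H-2))⁻¹ * x^(H-2) := by rw [one_mul, h2]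

lemma fnn_integrableOn (H c : ℝ) (h1 : H < 1) (hc : 0 < c) {N : ℝ} (hN : 0 < N) :
    IntegrableOn (fnn H c) (Ioi N) := by
  have hmaj : IntegrableOn (fun x : ℝ => (c^(H-2))⁻¹ * x^(H-2)) (Ioi N) :=
    (integrableOn_Ioi_rpow_of_lt (by linarith) hN).const_mul _
  refine Integrable.mono' hmaj ?_ ?_
  · exact (((fnn_contOn H c hc).mono (fun x hx => lt_trans hN hx)).aestronglyMeasurable
      measurableSet_Ioi)
  · refine (ae_restrict_iff' measurableSet_Ioi).2 (ae_of_all _ fun x hx => ?_)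
    have hx0 : 0 < x := lt_trans hN hx
    rw [Real.norm_eq_abs, abs_of_nonneg (fnn_nonneg H c x hc hx0.le)]
    exact fnn_le H c hc hx0

lemma hnn_integrableOn (H c : ℝ) (h0 : 0 < H) (h1 : H < 1) (hc : 0 < c) {N : ℝ} (hN : 0 < N) :
    IntegrableOn (hnn H c) (Ioi N) := by
  have hmaj : IntegrableOn
      (fun x : ℝ => (c^(H-2))⁻¹ * c * x^(H-4) + (c^(H-2))⁻¹ * 2 * x^(H-3)) (Ioi N) := by
    apply Integrable.add
    · exact (integrableOn_Ioi_rpow_of_lt (by linarith) hN).const_mul _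
    · exact (integrableOn_Ioi_rpow_of_lt (by linarith) hN).const_mul _
  refine Integrable.mono' hmaj ?_ ?_
  · exact (((hnn_contOn H c hc).mono (fun x hx => lt_trans hN hx)).aestronglyMeasurable
      measurableSet_Ioi)
  · refine (ae_restrict_iff' measurableSet_Ioi).2 (ae_of_all _ fun x hx => ?_)
    have hx0 : 0 < x := lt_trans hN hx
    have hfac : 0 ≤ c/x^2 + (2-H)/x := by
      have h2H : (0:ℝ) ≤ 2-H := by linarith
      positivity
    have hnn0 : 0 ≤ hnn H c x := mul_nonneg (fnn_nonneg H c x hc hx0.le) hfac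
    rw [Real.norm_eq_abs, abs_of_nonneg hnn0]
    have step1 : hnn H c x ≤ ((c^(H-2))⁻¹ * x^(H-2)) * (c/x^2 + (2-H)/x) := by
      exact mul_le_mul_of_nonneg_right (fnn_le H c hc hx0) hfac
    refine le_trans step1 ?_
    have e1 : x^(H-2) = x^(H-4) * x^2 := by
      have h := Real.rpow_add hx0 (H-4) 2
      rw [show H-2 = H-4+2 by ring, h, Real.rpow_two]
    have e2 : x^(H-2) = x^(H-3) * x := by
      have h := Real.rpow_add hx0 (H-3) 1
      rw [show H-2 = H-3+1 by ring, h, Real.rpow_one]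
    have hcH : 0 ≤ (c^(H-2))⁻¹ := by positivity
    have hxH3 : 0 ≤ x^(H-3) := Real.rpow_nonneg hx0.le _
    have expand : ((c^(H-2))⁻¹ * x^(H-2)) * (c/x^2 + (2-H)/x)
        = (c^(H-2))⁻¹ * c * x^(H-4) + (c^(H-2))⁻¹ * (2-H) * x^(H-3) := by
      rw [mul_add]
      congr 1
      · rw [e1]; field_simp
      · rw [e2]; field_simp
    rw [expand]
    have : (c^(H-2))⁻¹ * (2-H) * x^(H-3) ≤ (c^(H-2))⁻¹ * 2 * x^(H-3) := by
      apply mul_le_mul_of_nonneg_right _ hxH3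
      apply mul_le_mul_of_nonneg_left _ hcH
      linarith
    linarith

lemma hnn_nonneg (H c : ℝ) (h1 : H < 1) (hc : 0 < c) {x : ℝ} (hx : 0 < x) :
    0 ≤ hnn H c x := by
  apply mul_nonneg (fnn_nonneg H c x hc hx.le)
  have h2H : (0:ℝ) ≤ 2-H := by linarith
  positivity

lemma interval_est (H c : ℝ) (h1 : H < 1) (hc : 0 < c) {a : ℝ} (ha : 0 < a) :
    |fnn H c a - ∫ x in a..(a+1), fnn H c x| ≤ ∫ x in a..(a+1), hnn H c x := by
  have hsub : ∀ {p q : ℝ}, a ≤ p → p ≤ q → Set.uIcc p q ⊆ Ioi 0 := by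
    intro p q hp hpq u hu
    rw [Set.uIcc_of_le hpq] at hu
    exact lt_of_lt_of_le (lt_of_lt_of_le ha hp) hu.1
  have hf_ii : IntervalIntegrable (fnn H c) volume a (a+1) :=
    ((fnn_contOn H c hc).mono (hsub le_rfl (by linarith))).intervalIntegrable
  have hh_ii : IntervalIntegrable (hnn H c) volume a (a+1) :=
    ((hnn_contOn H c hc).mono (hsub le_rfl (by linarith))).intervalIntegrable
  set D : ℝ → ℝ := fun x => fnn H c x * (c/x^2 + (H-2)/x) with hD
  have hD_cont : ContinuousOn D (Ioi 0) := by
    apply (fnn_contOn H c hc).mul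
    apply ContinuousOn.add
    · exact continuousOn_const.div (continuousOn_pow 2) (fun x hx => pow_ne_zero 2 (ne_of_gt hx))
    · exact continuousOn_const.div continuousOn_id (fun x hx => ne_of_gt hx)
  have habs : ∀ {x : ℝ}, 0 < x → |D x| ≤ hnn H c x := by
    intro x hx
    have e1 : |(H-2)/x| = (2-H)/x := by
      rw [abs_div, abs_of_nonneg hx.le, abs_of_nonpos (by linarith : H-2 ≤ 0)]
      ring_nf
    rw [hD]
    simp only
    rw [abs_mul, abs_of_nonneg (fnn_nonneg H c x hc hx.le)]
    apply mul_le_mul_of_nonneg_left _ (fnn_nonneg H c x hc hx.le)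
    calc |c/x^2 + (H-2)/x| ≤ |c/x^2| + |(H-2)/x| := abs_add_le _ _
      _ = c/x^2 + (2-H)/x := by rw [abs_of_nonneg (by positivity), e1]
  have key : ∀ x ∈ Set.uIoc a (a+1), ‖fnn H c a - fnn H c x‖ ≤ ∫ t in a..(a+1), hnn H c t := by
    intro x hx
    rw [Set.uIoc_of_le (by linarith : a ≤ a+1)] at hx
    have hax : a ≤ x := hx.1.le
    have hxa1 : x ≤ a+1 := hx.2
    have hd : ∀ t ∈ Set.uIcc a x, HasDerivAt (fnn H c) (D t) t := fun t ht =>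
      hasDerivAt_fnn H c hc (hsub le_rfl hax ht)
    have hD_ii : IntervalIntegrable D volume a x :=
      (hD_cont.mono (hsub le_rfl hax)).intervalIntegrable
    have hftc : ∫ t in a..x, D t = fnn H c x - fnn H c a :=
      intervalIntegral.integral_eq_sub_of_hasDerivAt hd hD_ii
    rw [Real.norm_eq_abs, abs_sub_comm, ← hftc]
    calc |∫ t in a..x, D t| ≤ ∫ t in a..x, |D t| :=
          intervalIntegral.abs_integral_le_integral_abs hax
      _ ≤ ∫ t in a..x, hnn H c t := by
          apply intervalIntegral.integral_mono_on hax hD_ii.abs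
            ((hnn_contOn H c hc).mono (hsub le_rfl hax)).intervalIntegrable
          intro t ht
          exact habs (lt_of_lt_of_le ha ht.1)
      _ ≤ ∫ t in a..(a+1), hnn H c t := by
          apply intervalIntegral.integral_mono_interval le_rfl hax hxa1 _ hh_ii
          refine (ae_restrict_iff' measurableSet_Ioc).2 (ae_of_all _ fun t ht => ?_)
          exact hnn_nonneg H c h1 hc (lt_trans ha ht.1)
  have hconst : ∫ _x in a..(a+1), fnn H c a = fnn H c a := by simp
  have hsplit : fnn H c a - ∫ x in a..(a+1), fnn H c x
      = ∫ x in a..(a+1), (fnn H c a - fnn H c x) := by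
    rw [intervalIntegral.integral_sub intervalIntegrable_const hf_ii, hconst]
  rw [hsplit]
  have := intervalIntegral.norm_integral_le_of_norm_le_const
    (C := ∫ t in a..(a+1), hnn H c t) key
  simpa using this

lemma iUnion_Ioc_eq (N : ℝ) : (⋃ k : ℕ, Ioc (N + k) (N + k + 1)) = Ioi N := by
  ext x
  simp only [mem_iUnion, mem_Ioc, mem_Ioi]
  constructor
  · rintro ⟨k, hk, _⟩
    have : (0:ℝ) ≤ k := Nat.cast_nonneg k
    linarith
  · intro hx
    have hxN : 0 < x - N := by linarith
    have hm : 1 ≤ ⌈x - N⌉₊ := Nat.one_le_iff_ne_zero.2 (by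
      intro h
      have := Nat.ceil_eq_zero.1 h
      linarith)
    refine ⟨⌈x - N⌉₊ - 1, ?_, ?_⟩
    · have hcast : ((⌈x - N⌉₊ - 1 : ℕ) : ℝ) = (⌈x - N⌉₊ : ℝ) - 1 := by
        push_cast [hm]
        ring
      rw [hcast]
      have := Nat.ceil_lt_add_one hxN.le
      linarith
    · have hcast : ((⌈x - N⌉₊ - 1 : ℕ) : ℝ) = (⌈x - N⌉₊ : ℝ) - 1 := by
        push_cast [hm]
        ring
      rw [hcast]
      have := Nat.le_ceil (x - N)
      linarith

lemma hasSum_intervals (F : ℝ → ℝ) (N : ℝ) (hF : IntegrableOn F (Ioi N)) :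
    HasSum (fun k : ℕ => ∫ x in (N + k)..(N + k + 1), F x) (∫ x in Ioi N, F x) := by
  have hdisj : Pairwise (Function.onFun Disjoint (fun k : ℕ => Ioc (N + k) (N + k + 1))) := by
    intro i j hij
    apply Set.Ioc_disjoint_Ioc.2
    rcases hij.lt_or_gt with h | h
    · have : (i:ℝ) + 1 ≤ j := by exact_mod_cast Nat.succ_le_of_lt h
      refine le_trans (min_le_left _ _) (le_trans (by linarith) (le_max_right _ _))
    · have : (j:ℝ) + 1 ≤ i := by exact_mod_cast Nat.succ_le_of_lt h
      refine le_trans (min_le_right _ _) (le_trans (by linarith) (le_max_left _ _))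
  have := MeasureTheory.hasSum_integral_iUnion (μ := volume)
    (s := fun k : ℕ => Ioc (N + k) (N + k + 1)) (f := F)
    (fun _ => measurableSet_Ioc) hdisj (by rwa [iUnion_Ioc_eq])
  rw [iUnion_Ioc_eq] at this
  refine this.congr_fun fun k => ?_
  rw [intervalIntegral.integral_of_le (by linarith : N + (k:ℝ) ≤ N + k + 1)]

lemma g_integrableOn (H : ℝ) (h1 : H < 1) :
    IntegrableOn (fun u : ℝ => Real.exp (-u) * u^(-H)) (Ioi 0) := by
  have := Real.GammaIntegral_convergent (s := 1-H) (by linarith)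
  have he : (fun u : ℝ => Real.exp (-u) * u^(1-H-1)) = fun u : ℝ => Real.exp (-u) * u^(-H) := by
    funext u; rw [show (1:ℝ)-H-1 = -H by ring]
  rwa [he] at this

lemma hnn_integral_le (H : ℝ) (h0 : 0 < H) (h1 : H < 1) {N : ℝ} (hN : 1 ≤ N) :
    ∫ x in Ioi N, hnn H (N^2) x ≤ Real.Gamma (3-H) + (2-H) * Real.Gamma (2-H) := by
  have hN0 : 0 < N := by linarith
  have hc : 0 < N^2 := by positivity
  have hint1 : IntegrableOn (fun u : ℝ => Real.exp (-u) * u^(2-H)) (Ioi 0) := by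
    have := Real.GammaIntegral_convergent (s := 3-H) (by linarith)
    have he : (fun u : ℝ => Real.exp (-u) * u^(3-H-1)) = fun u : ℝ => Real.exp (-u) * u^(2-H) := by
      funext u; rw [show (3:ℝ)-H-1 = 2-H by ring]
    rwa [he] at this
  have hint2 : IntegrableOn (fun u : ℝ => Real.exp (-u) * u^(1-H)) (Ioi 0) := by
    have := Real.GammaIntegral_convergent (s := 2-H) (by linarith)
    have he : (fun u : ℝ => Real.exp (-u) * u^(2-H-1)) = fun u : ℝ => Real.exp (-u) * u^(1-H) := by
      funext u; rw [show (2:ℝ)-H-1 = 1-H by ring]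
    rwa [he] at this
  have hphi_int : IntegrableOn
      (fun u : ℝ => Real.exp (-u) * (u^(2-H) + (2-H) * u^(1-H))) (Ioi 0) := by
    have : (fun u : ℝ => Real.exp (-u) * (u^(2-H) + (2-H) * u^(1-H)))
        = fun u : ℝ => Real.exp (-u) * u^(2-H) + (2-H) * (Real.exp (-u) * u^(1-H)) := by
      funext u; ring
    rw [this]
    exact hint1.add (hint2.const_mul _)
  have hval : ∫ u in Ioi (0:ℝ), Real.exp (-u) * (u^(2-H) + (2-H) * u^(1-H))
      = Real.Gamma (3-H) + (2-H) * Real.Gamma (2-H) := by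
    have hsplit : ∫ u in Ioi (0:ℝ), Real.exp (-u) * (u^(2-H) + (2-H) * u^(1-H))
        = (∫ u in Ioi (0:ℝ), Real.exp (-u) * u^(2-H))
          + ∫ u in Ioi (0:ℝ), (2-H) * (Real.exp (-u) * u^(1-H)) := by
      rw [← MeasureTheory.integral_add hint1 (hint2.const_mul _)]
      congr 1 with u
      ring
    have G1 : ∫ u in Ioi (0:ℝ), Real.exp (-u) * u^(2-H) = Real.Gamma (3-H) := by
      rw [Real.Gamma_eq_integral (by linarith : (0:ℝ) < 3-H),
        show (3:ℝ)-H-1 = 2-H by ring]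
    have G2 : ∫ u in Ioi (0:ℝ), Real.exp (-u) * u^(1-H) = Real.Gamma (2-H) := by
      rw [Real.Gamma_eq_integral (by linarith : (0:ℝ) < 2-H),
        show (2:ℝ)-H-1 = 1-H by ring]
    rw [hsplit, MeasureTheory.integral_const_mul, G1, G2]
  have htend := MeasureTheory.intervalIntegral_tendsto_integral_Ioi N
    (hnn_integrableOn H (N^2) h0 h1 hc hN0) tendsto_id
  apply le_of_tendsto htend
  filter_upwards [eventually_ge_atTop N] with B hB
  simp only [id_eq]
  have hB0 : 0 < B := lt_of_lt_of_le hN0 hB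
  have hcN : N^2/N = N := by
    field_simp [sq]
  rw [integral_hnn_eq H (N^2) hc hN0 hB, hcN]
  have hcB0 : 0 < N^2/B := div_pos hc hB0
  have hcBN : N^2/B ≤ N := by
    rw [div_le_iff₀ hB0]
    nlinarith
  rw [intervalIntegral.integral_of_le hcBN, ← hval]
  apply MeasureTheory.setIntegral_mono_set hphi_int
  · refine (ae_restrict_iff' measurableSet_Ioi).2 (ae_of_all _ fun u hu => ?_)
    have hu0 : (0:ℝ) < u := hu
    have h2H : (0:ℝ) ≤ 2-H := by linarith
    positivity
  · refine HasSubset.Subset.eventuallyLE fun u hu => ?_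
    exact lt_of_lt_of_le hcB0 hu.1.le

lemma integral_fnn_Ioi (H : ℝ) (h0 : 0 < H) (h1 : H < 1) {N : ℝ} (hN : 1 ≤ N) :
    ∫ x in Ioi N, fnn H (N^2) x = N^2 * ∫ u in (0:ℝ)..N, Real.exp (-u) * u^(-H) := by
  have hN0 : 0 < N := by linarith
  have hc : 0 < N^2 := by positivity
  have hcN : N^2/N = N := by field_simp [sq]
  set g : ℝ → ℝ := fun u => Real.exp (-u) * u^(-H) with hg
  have hg_ii : ∀ {p q : ℝ}, 0 ≤ p → IntervalIntegrable g volume p q ∨ True := fun _ => Or.inr trivial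
  have hg_int : ∀ {p q : ℝ}, 0 ≤ p → p ≤ q → IntervalIntegrable g volume p q := by
    intro p q hp hpq
    rw [intervalIntegrable_iff_integrableOn_Ioc_of_le hpq]
    exact (g_integrableOn H h1).mono_set (fun u hu => lt_of_le_of_lt hp hu.1)
  have T1 := MeasureTheory.intervalIntegral_tendsto_integral_Ioi N
    (fnn_integrableOn H (N^2) h1 hc hN0) (tendsto_id (α := ℝ))
  have hsmall : Tendsto (fun B : ℝ => ∫ u in (0:ℝ)..(N^2/B), g u) atTop (nhds 0) := by
    have hub : Tendsto (fun B : ℝ => (N^2/B)^(1-H) / (1-H)) atTop (nhds 0) := by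
      have hdiv : Tendsto (fun B : ℝ => N^2/B) atTop (nhds 0) :=
        Tendsto.div_atTop tendsto_const_nhds tendsto_id
      have hrpow : Tendsto (fun y : ℝ => y^(1-H)) (nhds 0) (nhds 0) := by
        have hcont := (Real.continuousAt_rpow_const 0 (1-H) (Or.inr (by linarith))).tendsto
        rwa [Real.zero_rpow (by linarith : (1:ℝ)-H ≠ 0)] at hcont
      simpa using ((hrpow.comp hdiv).div_const (1-H))
    apply squeeze_zero' ?_ ?_ hub
    · filter_upwards [eventually_gt_atTop (0:ℝ)] with B hB
      apply intervalIntegral.integral_nonneg (by positivity)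
      intro u hu
      exact mul_nonneg (Real.exp_nonneg _) (Real.rpow_nonneg hu.1 _)
    · filter_upwards [eventually_gt_atTop (0:ℝ)] with B hB
      have hcB0 : (0:ℝ) ≤ N^2/B := by positivity
      have hrint : IntervalIntegrable (fun u : ℝ => u^(-H)) volume 0 (N^2/B) :=
        intervalIntegral.intervalIntegrable_rpow' (by linarith)
      have step : ∫ u in (0:ℝ)..(N^2/B), g u ≤ ∫ u in (0:ℝ)..(N^2/B), u^(-H) := by
        apply intervalIntegral.integral_mono_on hcB0 (hg_int le_rfl hcB0) hrint
        intro u hu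
        calc Real.exp (-u) * u^(-H) ≤ 1 * u^(-H) := by
              apply mul_le_mul_of_nonneg_right _ (Real.rpow_nonneg hu.1 _)
              rw [Real.exp_le_one_iff]
              linarith [hu.1]
          _ = u^(-H) := one_mul _
      have hval : ∫ u in (0:ℝ)..(N^2/B), (fun u : ℝ => u^(-H)) u
          = (N^2/B)^(1-H) / (1-H) := by
        rw [integral_rpow (Or.inl (by linarith : (-1:ℝ) < -H))]
        rw [Real.zero_rpow (by linarith : -H + 1 ≠ 0)]
        rw [show -H + 1 = 1 - H by ring]
        ring
      rw [← hval]
      exact step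
  have T2 : Tendsto (fun B : ℝ => ∫ x in N..B, fnn H (N^2) x) atTop
      (nhds (N^2 * ∫ u in (0:ℝ)..N, g u)) := by
    have heq : ∀ᶠ B : ℝ in atTop, N^2 * ((∫ u in (0:ℝ)..N, g u) - ∫ u in (0:ℝ)..(N^2/B), g u)
        = ∫ x in N..B, fnn H (N^2) x := by
      filter_upwards [eventually_ge_atTop N] with B hB
      have hB0 : 0 < B := lt_of_lt_of_le hN0 hB
      have hcB0 : (0:ℝ) ≤ N^2/B := by positivity
      have hcBN : N^2/B ≤ N := by
        rw [div_le_iff₀ hB0]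
        nlinarith
      rw [integral_fnn_eq H (N^2) hc hN0 hB, hcN]
      congr 1
      have hadj := intervalIntegral.integral_add_adjacent_intervals
        (hg_int le_rfl hcB0) (hg_int hcB0 hcBN)
      rw [← hadj]
      ring
    apply Tendsto.congr' heq
    have : Tendsto (fun B : ℝ => (∫ u in (0:ℝ)..N, g u) - ∫ u in (0:ℝ)..(N^2/B), g u) atTop
        (nhds ((∫ u in (0:ℝ)..N, g u) - 0)) := Tendsto.sub tendsto_const_nhds hsmall
    rw [sub_zero] at this
    exact this.const_mul _
  have := tendsto_nhds_unique T1 T2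
  simpa using this

set_option maxHeartbeats 1000000 in
lemma key_bound (H : ℝ) (h0 : 0 < H) (h1 : H < 1) (n : ℕ) (hn : 1 ≤ n) :
    |(1 / (n : ℝ)^2) * (∑' q : ℕ, if n ≤ q then
        Real.exp (-((n : ℝ))^2 / (q : ℝ)) * ((q : ℝ) / (n : ℝ)^2) ^ (H - 2) else 0)
      - ∫ u in (0:ℝ)..(n:ℝ), Real.exp (-u) * u^(-H)|
      ≤ (Real.Gamma (3-H) + (2-H) * Real.Gamma (2-H)) / (n:ℝ)^2 := by
  set N : ℝ := (n : ℝ) with hNdef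
  have hN : 1 ≤ N := by rw [hNdef]; exact_mod_cast hn
  have hN0 : 0 < N := by linarith
  have hc : 0 < N^2 := by positivity
  set G : ℕ → ℝ := fun q : ℕ => if n ≤ q then
      Real.exp (-((n : ℝ))^2 / (q : ℝ)) * ((q : ℝ) / (n : ℝ)^2) ^ (H - 2) else 0 with hGdef
  set a : ℕ → ℝ := fun k => fnn H (N^2) (N + k) with hadef
  have hGa : ∀ k : ℕ, G (k + n) = a k := by
    intro k
    have hc1 : ((k + n : ℕ) : ℝ) = N + k := by push_cast; ring
    simp only [hGdef, hadef]
    rw [if_pos (Nat.le_add_left n k), hc1]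
    simp only [fnn]
    rw [neg_div]
  set T : ℕ → ℝ := fun k => ∫ x in (N+k)..(N+k+1), fnn H (N^2) x with hTdef
  set V : ℕ → ℝ := fun k => ∫ x in (N+k)..(N+k+1), hnn H (N^2) x with hVdef
  have hTsum : HasSum T (∫ x in Ioi N, fnn H (N^2) x) :=
    hasSum_intervals _ _ (fnn_integrableOn H (N^2) h1 hc hN0)
  have hVsum : HasSum V (∫ x in Ioi N, hnn H (N^2) x) :=
    hasSum_intervals _ _ (hnn_integrableOn H (N^2) h0 h1 hc hN0)
  have hposNk : ∀ k : ℕ, (0:ℝ) < N + k := by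
    intro k
    have : (0:ℝ) ≤ k := Nat.cast_nonneg k
    linarith
  have hest : ∀ k : ℕ, |a k - T k| ≤ V k := by
    intro k
    exact interval_est H (N^2) h1 hc (hposNk k)
  have ha_nonneg : ∀ k, 0 ≤ a k := fun k => fnn_nonneg H (N^2) _ hc (hposNk k).le
  have ha_summable : Summable a := by
    apply Summable.of_nonneg_of_le ha_nonneg (fun k => ?_) (hTsum.summable.add hVsum.summable)
    have h := (abs_le.1 (hest k)).2
    show a k ≤ T k + V k
    linarith
  have hV_nonneg : ∀ k, 0 ≤ V k := by
    intro k
    apply intervalIntegral.integral_nonneg (by linarith : N + (k:ℝ) ≤ N + k + 1)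
    intro u hu
    exact hnn_nonneg H (N^2) h1 hc (lt_of_lt_of_le (hposNk k) hu.1)
  have hdiff : |(∑' k, a k) - ∫ x in Ioi N, fnn H (N^2) x| ≤ ∫ x in Ioi N, hnn H (N^2) x := by
    rw [← hTsum.tsum_eq, ← Summable.tsum_sub ha_summable hTsum.summable]
    have hsumabs : Summable (fun k => |a k - T k|) :=
      Summable.of_nonneg_of_le (fun k => abs_nonneg _) hest hVsum.summable
    have habs_eq : (fun k => ‖a k - T k‖) = fun k => |a k - T k| := by
      funext k; exact Real.norm_eq_abs _
    calc |∑' k, (a k - T k)| ≤ ∑' k, |a k - T k| := by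
          have h := norm_tsum_le_tsum_norm (f := fun k => a k - T k)
            (by rw [habs_eq]; exact hsumabs)
          rw [habs_eq] at h
          simpa [Real.norm_eq_abs] using h
      _ ≤ ∑' k, V k := Summable.tsum_le_tsum hest hsumabs hVsum.summable
      _ = _ := hVsum.tsum_eq
  have hsum_shift : Summable (fun k : ℕ => G (k + n)) := (summable_congr hGa).2 ha_summable
  have hG_summable : Summable G := (summable_nat_add_iff n).1 hsum_shift
  have hS : ∑' q, G q = ∑' k, a k := by
    rw [← Summable.sum_add_tsum_nat_add n hG_summable,
      Finset.sum_eq_zero (fun i hi => if_neg (Nat.not_le.2 (Finset.mem_range.1 hi))),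
      zero_add, tsum_congr hGa]
  have hI := integral_fnn_Ioi H h0 h1 hN
  have hVle := hnn_integral_le H h0 h1 hN
  rw [hS]
  have heq : (1/N^2) * (∑' k, a k) - ∫ u in (0:ℝ)..N, Real.exp (-u) * u^(-H)
      = (1/N^2) * ((∑' k, a k) - ∫ x in Ioi N, fnn H (N^2) x) := by
    rw [hI]
    field_simp
  rw [heq, abs_mul, abs_of_nonneg (by positivity : (0:ℝ) ≤ 1/N^2)]
  have hfin := mul_le_mul_of_nonneg_left (le_trans hdiff hVle) (by positivity : (0:ℝ) ≤ 1/N^2)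
  calc 1/N^2 * |∑' (k : ℕ), a k - ∫ (x : ℝ) in Ioi N, fnn H (N^2) x|
      ≤ 1/N^2 * (Real.Gamma (3-H) + (2-H) * Real.Gamma (2-H)) := hfin
    _ = (Real.Gamma (3-H) + (2-H) * Real.Gamma (2-H)) / N^2 := by ring

/-- For `0 < H < 1`,
`(1/n²)·∑_{q=n}^{∞} exp(−n²/q)·(q/n²)^(H−2) → Γ(1−H)` as `n → ∞`. -/
theorem stmt_4 (H : ℝ) (h0 : 0 < H) (h1 : H < 1) :
    Tendsto (fun n : ℕ => (1 / (n : ℝ)^2) *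
        ∑' q : ℕ, if n ≤ q then Real.exp (-((n : ℝ))^2 / (q : ℝ)) * ((q : ℝ) / (n : ℝ)^2) ^ (H - 2) else 0)
      atTop (nhds (Real.Gamma (1 - H))) := by
  set A : ℕ → ℝ := fun n : ℕ => (1 / (n : ℝ)^2) *
      ∑' q : ℕ, if n ≤ q then Real.exp (-((n : ℝ))^2 / (q : ℝ)) * ((q : ℝ) / (n : ℝ)^2) ^ (H - 2) else 0
    with hA
  set Gn : ℕ → ℝ := fun n : ℕ => ∫ u in (0:ℝ)..(n:ℝ), Real.exp (-u) * u^(-H) with hGn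
  have hgam : Real.Gamma (1-H) = ∫ u in Ioi (0:ℝ), Real.exp (-u) * u^(-H) := by
    rw [Real.Gamma_eq_integral (by linarith : (0:ℝ) < 1-H), show (1:ℝ)-H-1 = -H by ring]
  have hG : Tendsto Gn atTop (nhds (Real.Gamma (1-H))) := by
    rw [hgam]
    exact MeasureTheory.intervalIntegral_tendsto_integral_Ioi 0 (g_integrableOn H h1)
      tendsto_natCast_atTop_atTop
  have hbound : Tendsto (fun n : ℕ => (Real.Gamma (3-H) + (2-H) * Real.Gamma (2-H)) / (n:ℝ)^2)
      atTop (nhds 0) := by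
    apply Tendsto.div_atTop tendsto_const_nhds
    exact (tendsto_pow_atTop (two_ne_zero)).comp tendsto_natCast_atTop_atTop
  have hzero : Tendsto (fun n : ℕ => A n - Gn n) atTop (nhds 0) := by
    apply squeeze_zero_norm' _ hbound
    filter_upwards [eventually_ge_atTop 1] with n hn
    rw [Real.norm_eq_abs]
    exact key_bound H h0 h1 n hn
  have := hG.add hzero
  rw [add_zero] at this
  have hfun : (fun n : ℕ => Gn n + (A n - Gn n)) = A := by
    funext n
    ring
  rwa [hfun] at this
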